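/- Let 0 < r₀ ∈ ℝ and let d : [r₀,+∞) → [0,∞) be bounded with d(R) → 0 as R → +∞. Define Q(x) := sup_{t ∈ [r₀,x]} ( t · sup_{s ∈ [t,+∞)} d(s) ) for x ∈ [r₀,+∞). Then Q is increasing, Q(x)/x → 0 as x → +∞, and d(R) ≤ (1/ln(R/r)) ∫_r^R (Q(x)/x²) dx for all r₀ ≤ r < R < +∞. -/

import Mathlib

open MeasureTheory Set Filter

theorem stmt_14 (r₀ : ℝ) (hr₀ : 0 < r₀) (d : ℝ → ℝ)
    (hd_nonneg : ∀ x ∈ Set.Ici r₀, 0 ≤ d x)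
    (hd_bdd : ∃ C : ℝ, ∀ x ∈ Set.Ici r₀, d x ≤ C)
    (hd_lim : Filter.Tendsto d Filter.atTop (nhds 0))
    -- `Q(x) = sup_{t ∈ [r₀,x]} ( t · sup_{s ∈ [t,∞)} d s )`:
    (Q : ℝ → ℝ)
    (hQ : ∀ x : ℝ, r₀ ≤ x →
      Q x = sSup ((fun t => t * sSup (d '' Set.Ici t)) '' Set.Icc r₀ x)) :
    MonotoneOn Q (Set.Ici r₀) ∧
    Filter.Tendsto (fun x => Q x / x) Filter.atTop (nhds 0) ∧
    (∀ r R : ℝ, r₀ ≤ r → r < R →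
      d R ≤ (Real.log (R / r))⁻¹ * ∫ x in r..R, Q x / x ^ 2) := by
  obtain ⟨C, hC⟩ := hd_bdd
  set m : ℝ → ℝ := fun t => sSup (d '' Set.Ici t) with hm
  set f : ℝ → ℝ := fun t => t * m t with hf
  have hC0 : 0 ≤ C := le_trans (hd_nonneg r₀ Set.self_mem_Ici) (hC r₀ Set.self_mem_Ici)
  -- basic facts about m
  have hm_bdd : ∀ t, r₀ ≤ t → ∀ y ∈ d '' Set.Ici t, y ≤ C := by
    rintro t ht y ⟨s, hs, rfl⟩
    exact hC s (Set.mem_Ici.mpr (le_trans ht hs))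
  have hm_bddAbove : ∀ t, r₀ ≤ t → BddAbove (d '' Set.Ici t) := fun t ht =>
    ⟨C, fun y hy => hm_bdd t ht y hy⟩
  have hm_ne : ∀ t : ℝ, (d '' Set.Ici t).Nonempty := fun t =>
    ⟨d t, t, Set.self_mem_Ici, rfl⟩
  have hdm : ∀ t, r₀ ≤ t → ∀ s, t ≤ s → d s ≤ m t := by
    intro t ht s hs
    exact le_csSup (hm_bddAbove t ht) ⟨s, Set.mem_Ici.mpr hs, rfl⟩
  have hm_nonneg : ∀ t, r₀ ≤ t → 0 ≤ m t :=
    fun t ht => le_trans (hd_nonneg t ht) (hdm t ht t le_rfl)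
  have hm_leC : ∀ t, r₀ ≤ t → m t ≤ C := fun t ht =>
    csSup_le (hm_ne t) (hm_bdd t ht)
  -- f is bounded on Icc r₀ x
  have hf_bdd : ∀ x, r₀ ≤ x → ∀ b ∈ f '' Set.Icc r₀ x, b ≤ x * C := by
    rintro x hx b ⟨t, ⟨ht1, ht2⟩, rfl⟩
    exact mul_le_mul ht2 (hm_leC t ht1) (hm_nonneg t ht1) (le_trans hr₀.le hx)
  have hf_bddAbove : ∀ x, r₀ ≤ x → BddAbove (f '' Set.Icc r₀ x) := fun x hx =>
    ⟨x * C, fun b hb => hf_bdd x hx b hb⟩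
  have hf_ne : ∀ x, r₀ ≤ x → (f '' Set.Icc r₀ x).Nonempty := fun x hx =>
    ⟨f r₀, r₀, ⟨le_rfl, hx⟩, rfl⟩
  have hQf : ∀ x, r₀ ≤ x → ∀ t, r₀ ≤ t → t ≤ x → f t ≤ Q x := by
    intro x hx t ht htx
    rw [hQ x hx]
    exact le_csSup (hf_bddAbove x hx) ⟨t, ⟨ht, htx⟩, rfl⟩
  have hQ_ge : ∀ x, r₀ ≤ x → x * m x ≤ Q x := fun x hx => hQf x hx x hx le_rfl
  have hQ_nonneg : ∀ x, r₀ ≤ x → 0 ≤ Q x := fun x hx =>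
    le_trans (mul_nonneg (le_trans hr₀.le hx) (hm_nonneg x hx)) (hQ_ge x hx)
  have hmono : MonotoneOn Q (Set.Ici r₀) := by
    intro x hx y hy hxy
    rw [hQ x hx, hQ y hy]
    exact csSup_le_csSup (hf_bddAbove y hy) (hf_ne x hx)
      (Set.image_mono (Set.Icc_subset_Icc_right hxy))
  refine ⟨hmono, ?_, ?_⟩
  · -- Q x / x → 0
    rw [Metric.tendsto_atTop]
    intro ε hε
    have hε4 : 0 < ε / 4 := by linarith
    rw [Metric.tendsto_atTop] at hd_lim
    obtain ⟨T₀, hT₀⟩ := hd_lim (ε / 4) hε4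
    set T : ℝ := max T₀ r₀ with hT
    have hTr : r₀ ≤ T := le_max_right _ _
    have hmT : ∀ t, T ≤ t → m t ≤ ε / 4 := by
      intro t ht
      refine csSup_le (hm_ne t) ?_
      rintro y ⟨s, hs, rfl⟩
      have := hT₀ s (le_trans (le_trans (le_max_left _ _) ht) hs)
      rw [Real.dist_eq, sub_zero] at this
      exact (le_abs_self _).trans this.le
    refine ⟨max T ((Q T + 1) / (ε / 4)), fun x hx => ?_⟩
    have hxT : T ≤ x := le_trans (le_max_left _ _) hx
    have hxr : r₀ ≤ x := le_trans hTr hxT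
    have hx2 : (Q T + 1) / (ε / 4) ≤ x := le_trans (le_max_right _ _) hx
    have hQT1 : 0 < Q T + 1 := by linarith [hQ_nonneg T hTr]
    have hxpos : 0 < x := lt_of_lt_of_le (div_pos hQT1 hε4) hx2
    have hQT : Q T + 1 ≤ x * (ε / 4) := by
      rw [div_le_iff₀ hε4] at hx2
      linarith
    have hQx : Q x ≤ x * (ε / 4) := by
      rw [hQ x hxr]
      refine csSup_le (hf_ne x hxr) ?_
      rintro b ⟨t, ⟨ht1, ht2⟩, rfl⟩
      by_cases htT : t ≤ T
      · exact le_trans (hQf T hTr t ht1 htT) (by linarith)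
      · push_neg at htT
        exact mul_le_mul ht2 (hmT t htT.le) (hm_nonneg t ht1) hxpos.le
    rw [Real.dist_eq, sub_zero, abs_of_nonneg (div_nonneg (hQ_nonneg x hxr) hxpos.le)]
    have : Q x / x ≤ ε / 4 := by rw [div_le_iff₀ hxpos]; linarith
    linarith
  · -- the integral inequality
    intro r R hr hrR
    have hrpos : 0 < r := lt_of_lt_of_le hr₀ hr
    have hRpos : 0 < R := lt_trans hrpos hrR
    have hL : 0 < Real.log (R / r) := Real.log_pos ((one_lt_div hrpos).mpr hrR)
    have huIcc : Set.uIcc r R = Set.Icc r R := Set.uIcc_of_le hrR.le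
    have hmem_pos : ∀ x ∈ Set.Icc r R, 0 < x := fun x hx => lt_of_lt_of_le hrpos hx.1
    -- integrability of constants * x⁻¹
    have hint1 : IntervalIntegrable (fun x => d R * x⁻¹) volume r R := by
      apply ContinuousOn.intervalIntegrable
      apply ContinuousOn.mul continuousOn_const
      apply ContinuousOn.inv₀ continuousOn_id
      intro x hx
      rw [huIcc] at hx
      exact (hmem_pos x hx).ne'
    have hint2 : IntervalIntegrable (fun x => Q x / x ^ 2) volume r R := by
      have hmonoQ : MonotoneOn Q (Set.uIcc r R) := by
        rw [huIcc]
        exact hmono.mono (fun x hx => le_trans hr hx.1)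
      have h1 : IntervalIntegrable Q volume r R := hmonoQ.intervalIntegrable
      have h2 := h1.mul_continuousOn (g := fun x => (x ^ 2)⁻¹) ?_
      · simpa [div_eq_mul_inv] using h2
      · apply ContinuousOn.inv₀ (by fun_prop)
        intro x hx
        rw [huIcc] at hx
        exact pow_ne_zero _ (hmem_pos x hx).ne'
    have hptwise : ∀ x ∈ Set.Icc r R, d R * x⁻¹ ≤ Q x / x ^ 2 := by
      intro x hx
      have hxpos := hmem_pos x hx
      have hxr₀ : r₀ ≤ x := le_trans hr hx.1
      have h1 : d R ≤ m x := hdm x hxr₀ R hx.2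
      have h2 : x * d R ≤ Q x := le_trans (by nlinarith) (hQ_ge x hxr₀)
      rw [mul_inv_le_iff₀ hxpos, div_mul_eq_mul_div, le_div_iff₀ (by positivity)]
      nlinarith
    have hmono_int := intervalIntegral.integral_mono_on hrR.le hint1 hint2 hptwise
    rw [intervalIntegral.integral_const_mul, integral_inv (by
      rw [huIcc]; intro h; exact absurd (hmem_pos 0 h) (lt_irrefl 0))] at hmono_int
    rw [le_inv_mul_iff₀ hL]
    linarith
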